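/- arXiv:2105.02842 — 6 statements merged into one kernel-verified Lean document; each statement's English description precedes it below -/
import Mathlib

section
/- Horizontal FPC composition/decomposition: in a category, given two commutative squares pasted horizontally, if the right square is a final pullback complement (of its top-right and right edges), then the composite rectangle is an FPC if and only if the left square is an FPC. -/
open CategoryTheory Limits

/-- `(n, g)` is a final pullback complement of `(f, m)`. -/
def IsFPC {C : Type*} [Category C] {A B X F : C}
    (f : A ⟶ B) (m : B ⟶ X) (n : A ⟶ F) (g : F ⟶ X) : Prop :=
  IsPullback f n m g ∧
  ∀ {D E : C} (b : D ⟶ B) (d : D ⟶ E) (e : E ⟶ X), IsPullback b d m e →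
    ∀ a : D ⟶ A, a ≫ f = b →
      ∃! h : E ⟶ F, h ≫ g = e ∧ d ≫ h = a ≫ n

/-- Horizontal FPC composition/decomposition: for two commutative squares pasted
horizontally along a common vertical edge, if the right square is an FPC then
the outer rectangle is an FPC iff the left square is an FPC. -/
theorem stmt_8 {C : Type*} [Category C]
    {A B X A' B' X' : C}
    (f : A ⟶ B) (g : B ⟶ X) (f' : A' ⟶ B') (g' : B' ⟶ X')
    (a : A ⟶ A') (b : B ⟶ B') (x : X ⟶ X')
    (hleft : f ≫ b = a ≫ f') (hright : g ≫ x = b ≫ g')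
    (hfpc : IsFPC g x b g') :
    IsFPC (f ≫ g) x a (f' ≫ g') ↔ IsFPC f b a f' := by
  obtain ⟨hpb, hup⟩ := hfpc
  constructor
  · rintro ⟨opb, oup⟩
    refine ⟨IsPullback.of_right opb hleft hpb, ?_⟩
    intro D E b₀ d e hpbe a₀ ha₀
    obtain ⟨h, ⟨hg1, hd1⟩, huniq⟩ :=
      oup (b₀ ≫ g) d (e ≫ g') (hpbe.paste_horiz hpb) a₀
        (by rw [← Category.assoc, ha₀])
    obtain ⟨k, hk, kuniq⟩ :=
      hup (b₀ ≫ g) d (e ≫ g') (hpbe.paste_horiz hpb) b₀ rfl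
    have he : h ≫ f' = e := by
      have e1 : h ≫ f' = k := kuniq (h ≫ f')
        ⟨by rw [Category.assoc]; exact hg1,
         by rw [← Category.assoc, hd1, Category.assoc, ← hleft,
           ← Category.assoc, ha₀]⟩
      have e2 : e = k := kuniq e ⟨rfl, hpbe.w.symm⟩
      rw [e1, e2]
    refine ⟨h, ⟨he, hd1⟩, ?_⟩
    rintro h' ⟨h'f, h'd⟩
    exact huniq h' ⟨by rw [← Category.assoc, h'f], h'd⟩
  · rintro ⟨lpb, lup⟩
    refine ⟨lpb.paste_horiz hpb, ?_⟩
    intro D E b₀ d e hpbe a₀ ha₀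
    obtain ⟨h₁, ⟨h₁g, h₁d⟩, h₁uniq⟩ :=
      hup b₀ d e hpbe (a₀ ≫ f) (by rw [Category.assoc]; exact ha₀)
    have lsq : IsPullback (a₀ ≫ f) d b h₁ := by
      refine IsPullback.of_right ?_ h₁d.symm hpb
      have : (a₀ ≫ f) ≫ g = b₀ := by rw [Category.assoc]; exact ha₀
      rw [this, h₁g]; exact hpbe
    obtain ⟨h, ⟨hf, hd⟩, huniq⟩ := lup (a₀ ≫ f) d h₁ lsq a₀ rfl
    refine ⟨h, ⟨by rw [← Category.assoc, hf, h₁g], hd⟩, ?_⟩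
    rintro h' ⟨h'g, h'd⟩
    have : h' ≫ f' = h₁ := h₁uniq (h' ≫ f')
      ⟨by rw [Category.assoc]; exact h'g,
       by rw [← Category.assoc, h'd, Category.assoc, ← hleft, ← Category.assoc]⟩
    exact huniq h' ⟨this, h'd⟩
end

section
/- Pullback-pushout decomposition: in an M-adhesive category, given two commutative squares pasted horizontally where the outer rectangle is a pullback, the left square is a pushout along an M-morphism that is stable under pullback, and the rightmost vertical morphism χ is in M, then both the left and right squares are pullbacks. -/
open CategoryTheory Limits

/-- A pushout square that is stable under pullback: every commutative cube over
it whose vertical faces are pullbacks has a pushout as its top face. -/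
def IsStablePushout {C : Type*} [Category C] {A B X D : C}
    (f : A ⟶ B) (g : A ⟶ X) (h : B ⟶ D) (k : X ⟶ D) : Prop :=
  IsPushout f g h k ∧
  ∀ {A' B' X' D' : C} (f' : A' ⟶ B') (g' : A' ⟶ X') (h' : B' ⟶ D') (k' : X' ⟶ D')
    (α : A' ⟶ A) (β : B' ⟶ B) (γ : X' ⟶ X) (δ : D' ⟶ D),
    IsPullback f' α β f → IsPullback g' α γ g →
    IsPullback h' β δ h → IsPullback k' γ δ k →
    IsPushout f' g' h' k'

/-- A square with identity on one side and a mono on the parallel side is a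
pullback. -/
lemma isPullback_id_of_mono' {C : Type*} [Category C] {B P B' : C}
    (w : B ⟶ P) (p : P ⟶ B') [Mono p] :
    IsPullback w (𝟙 B) p (w ≫ p) := by
  refine IsPullback.of_isLimit (PullbackCone.IsLimit.mk (by simp)
    (fun s => s.snd) (fun s => ?_) (fun s => by simp) (fun s m _ hm => by simpa using hm))
  have := s.condition
  rw [← cancel_mono p]
  simp only [Category.assoc]
  rw [← this]

/-- Pullback-pushout decomposition in an M-adhesive category: if the outer
rectangle of two horizontally pasted squares is a pullback, the left square is
a pullback-stable pushout along an M-morphism, and the right vertical morphism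
`χ` is in `M`, then both squares are pullbacks. -/
theorem stmt_12 {C : Type*} [Category C]
    (M : MorphismProperty C)
    (hM_mono : ∀ {X Y : C} (f : X ⟶ Y), M f → Mono f)
    (hM_iso : ∀ {X Y : C} (f : X ⟶ Y), IsIso f → M f)
    (hM_comp : ∀ {X Y Z : C} (f : X ⟶ Y) (g : Y ⟶ Z), M f → M g → M (f ≫ g))
    (hM_pb : ∀ {P X Y Z : C} (fst : P ⟶ X) (snd : P ⟶ Y) (h : X ⟶ Z) (k : Y ⟶ Z),
      IsPullback fst snd h k → M k → M fst)
    (hM_po : ∀ {A B X D : C} (f : A ⟶ B) (g : A ⟶ X) (h : B ⟶ D) (k : X ⟶ D),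
      IsPushout f g h k → M g → M h)
    (hM_po_pb : ∀ {A B X D : C} (f : A ⟶ B) (g : A ⟶ X) (h : B ⟶ D) (k : X ⟶ D),
      IsPushout f g h k → M g → IsPullback f g h k)
    (hM_po_stable : ∀ {A B X D : C} (f : A ⟶ B) (g : A ⟶ X) (h : B ⟶ D) (k : X ⟶ D),
      IsPushout f g h k → M g → IsStablePushout f g h k)
    [HasPullbacks C]
    {A B X A' B' X' : C}
    (f : A ⟶ B) (g : B ⟶ X) (f' : A' ⟶ B') (g' : B' ⟶ X')
    (a : A ⟶ A') (b : B ⟶ B') (χ : X ⟶ X')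
    (hleft : f ≫ b = a ≫ f') (hright : g ≫ χ = b ≫ g')
    (houter : IsPullback (f ≫ g) a χ (f' ≫ g'))
    (hpo : IsStablePushout f a b f') (ha : M a) (hχ : M χ) :
    IsPullback f a b f' ∧ IsPullback g b χ g' := by
  -- Pullback of g' along χ
  let P := pullback g' χ
  let π₁ : P ⟶ B' := pullback.fst g' χ
  let π₂ : P ⟶ X := pullback.snd g' χ
  have hPpb : IsPullback π₂ π₁ χ g' := (IsPullback.of_hasPullback g' χ).flip
  have hmπ₁ : Mono π₁ := hM_mono _ (hM_pb π₁ π₂ g' χ (IsPullback.of_hasPullback g' χ) hχ)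
  have hma : Mono a := hM_mono _ ha
  -- induced morphism w : B ⟶ P
  let w : B ⟶ P := pullback.lift b g hright.symm
  have hw₁ : w ≫ π₁ = b := pullback.lift_fst _ _ _
  have hw₂ : w ≫ π₂ = g := pullback.lift_snd _ _ _
  -- the left-over square is a pullback
  have houter' : IsPullback ((f ≫ w) ≫ π₂) a χ (f' ≫ g') := by
    rw [Category.assoc, hw₂]; exact houter
  have sq1 : IsPullback (f ≫ w) a π₁ f' :=
    houter'.of_right (by rw [Category.assoc, hw₁, hleft]) hPpb
  -- pull back the pushout along π₁ : top square is a pushout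
  have pbW : IsPullback w (𝟙 B) π₁ b := by
    have := isPullback_id_of_mono' w π₁
    rwa [hw₁] at this
  have pbF : IsPullback f (𝟙 A) (𝟙 B) f := IsPullback.of_vert_isIso ⟨by simp⟩
  have pbA : IsPullback (𝟙 A) (𝟙 A) a a := IsKernelPair.id_of_mono a
  have topPO : IsPushout f (𝟙 A) w (f ≫ w) :=
    hpo.2 f (𝟙 A) w (f ≫ w) (𝟙 A) (𝟙 B) a π₁ pbF pbA pbW sq1
  -- hence w is an isomorphism
  have hwiso : IsIso w := by
    let l : P ⟶ B := topPO.desc (𝟙 B) f (by simp)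
    have hl₁ : w ≫ l = 𝟙 B := topPO.inl_desc _ _ _
    have hl₂ : (f ≫ w) ≫ l = f := topPO.inr_desc _ _ _
    refine ⟨l, hl₁, ?_⟩
    apply topPO.hom_ext
    · rw [← Category.assoc, hl₁]; simp
    · rw [← Category.assoc, hl₂]; simp
  -- right square of the decomposition with iso w
  have isoSq : IsPullback w b π₁ (𝟙 B') :=
    IsPullback.of_horiz_isIso ⟨by rw [hw₁, Category.comp_id]⟩
  -- left square is a pullback
  have left : IsPullback f a b f' := by
    have : IsPullback (f ≫ w) a π₁ (f' ≫ 𝟙 B') := by rwa [Category.comp_id]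
    exact this.of_right hleft isoSq
  refine ⟨left, ?_⟩
  -- right square is a pullback
  have := isoSq.paste_horiz hPpb
  rwa [hw₂, Category.id_comp] at this
end

section
/- In the category SGraph of directed simple graphs, a monomorphism (f_V, f_E) : (V,E,ι) → (V',E',ι') is a regular monomorphism if and only if it is edge-reflecting, i.e., the square (ι, f_E ; f_V × f_V, ι') is a pullback in Set. -/
open CategoryTheory Limits

/-- A directed simple graph: a set of vertices, a set of edges, and an
injective incidence map `ι : E → V × V`. -/
structure SGraph : Type 1 where
  V : Type
  E : Type
  ι : E → V × V
  inj : Function.Injective ι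

/-- A morphism of directed simple graphs: a pair of functions commuting with
the incidence maps. -/
@[ext]
structure SGraphHom (G H : SGraph) where
  fV : G.V → H.V
  fE : G.E → H.E
  comm : ∀ e, H.ι (fE e) = (fV (G.ι e).1, fV (G.ι e).2)

instance : Category SGraph where
  Hom := SGraphHom
  id G := ⟨id, id, fun e => rfl⟩
  comp f g := ⟨g.fV ∘ f.fV, g.fE ∘ f.fE, fun e => by
    simp [Function.comp, g.comm, f.comm]⟩
  id_comp f := SGraphHom.ext rfl rfl
  comp_id f := SGraphHom.ext rfl rfl
  assoc f g h := SGraphHom.ext rfl rfl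

@[simp] lemma SGraph_comp_fV {G H K : SGraph} (f : G ⟶ H) (g : H ⟶ K) :
    (f ≫ g).fV = g.fV ∘ f.fV := rfl

@[simp] lemma SGraph_comp_fE {G H K : SGraph} (f : G ⟶ H) (g : H ⟶ K) :
    (f ≫ g).fE = g.fE ∘ f.fE := rfl

lemma SGraph.mono_fV_inj {G H : SGraph} (f : G ⟶ H) [Mono f] :
    Function.Injective f.fV := by
  intro x y hxy
  let P : SGraph := ⟨Unit, Empty, Empty.elim, fun a => a.elim⟩
  let a : P ⟶ G := ⟨fun _ => x, Empty.elim, fun e => e.elim⟩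
  let b : P ⟶ G := ⟨fun _ => y, Empty.elim, fun e => e.elim⟩
  have hab : a ≫ f = b ≫ f := by
    apply SGraphHom.ext
    · funext u; exact hxy
    · funext e; exact e.elim
  have h2 := (cancel_mono f).mp hab
  exact congrFun (congrArg SGraphHom.fV h2) ()

/-- In the category `SGraph`, a monomorphism is a regular monomorphism if and
only if it is edge-reflecting. -/
theorem stmt_14 {G H : SGraph} (f : G ⟶ H) [Mono f] :
    Nonempty (RegularMono f) ↔
      (∀ (e' : H.E) (u v : G.V), H.ι e' = (f.fV u, f.fV v) →
        ∃ e : G.E, f.fE e = e' ∧ G.ι e = (u, v)) := by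
  have hinj := SGraph.mono_fV_inj f
  constructor
  · rintro ⟨r⟩ e' u v he
    -- A graph with a single edge
    let A : SGraph := ⟨Bool, Unit, fun _ => (true, false),
      fun a b _ => Subsingleton.elim a b⟩
    let k : A ⟶ H := ⟨fun b => bif b then f.fV u else f.fV v, fun _ => e',
      fun _ => he⟩
    have hwV : ∀ x : G.V, r.left.fV (f.fV x) = r.right.fV (f.fV x) := by
      intro x
      exact congrFun (congrArg SGraphHom.fV r.w) x
    have hk : k ≫ r.left = k ≫ r.right := by
      apply SGraphHom.ext
      · funext b
        cases b <;> exact hwV _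
      · funext _
        show r.left.fE e' = r.right.fE e'
        apply r.Z.inj
        refine (r.left.comm e').trans (Eq.trans ?_ (r.right.comm e').symm)
        rw [he]
        show (r.left.fV (f.fV u), r.left.fV (f.fV v)) =
          (r.right.fV (f.fV u), r.right.fV (f.fV v))
        rw [hwV u, hwV v]
    obtain ⟨m, hm⟩ := Fork.IsLimit.lift' r.isLimit k hk
    have hm' : m ≫ f = k := by simpa using hm
    refine ⟨m.fE (), ?_, ?_⟩
    · exact congrFun (congrArg SGraphHom.fE hm') ()
    · have hmu : m.fV true = u := hinj (congrFun (congrArg SGraphHom.fV hm') true)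
      have hmv : m.fV false = v := hinj (congrFun (congrArg SGraphHom.fV hm') false)
      refine (m.comm ()).trans ?_
      show (m.fV true, m.fV false) = (u, v)
      rw [hmu, hmv]
  · intro hrefl
    let K : SGraph :=
      { V := H.V × Prop
        E := H.E × Prop × Prop
        ι := fun x => (((H.ι x.1).1, x.2.1), ((H.ι x.1).2, x.2.2))
        inj := by
          rintro ⟨e, p, q⟩ ⟨e', p', q'⟩ hx
          simp only [Prod.mk.injEq] at hx
          obtain ⟨⟨h1, h2⟩, h3, h4⟩ := hx
          have : H.ι e = H.ι e' := Prod.ext h1 h3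
          exact Prod.ext (H.inj this) (Prod.ext h2 h4) }
    let g : H ⟶ K := ⟨fun x => (x, True), fun e => (e, True, True), fun _ => rfl⟩
    let h : H ⟶ K :=
      ⟨fun x => (x, ∃ y, f.fV y = x),
       fun e => (e, (∃ y, f.fV y = (H.ι e).1), (∃ y, f.fV y = (H.ι e).2)),
       fun _ => rfl⟩
    have w : f ≫ g = f ≫ h := by
      apply SGraphHom.ext
      · funext x
        show (f.fV x, True) = (f.fV x, ∃ y, f.fV y = f.fV x)
        exact congrArg (Prod.mk (f.fV x)) (eq_true ⟨x, rfl⟩).symm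
      · funext e
        show (f.fE e, True, True) =
          (f.fE e, (∃ y, f.fV y = (H.ι (f.fE e)).1), (∃ y, f.fV y = (H.ι (f.fE e)).2))
        rw [f.comm e]
        exact congrArg (Prod.mk (f.fE e))
          (congrArg₂ Prod.mk (eq_true ⟨(G.ι e).1, rfl⟩).symm
            (eq_true ⟨(G.ι e).2, rfl⟩).symm)
    refine ⟨⟨K, g, h, w, ?_⟩⟩
    apply Fork.IsLimit.ofExistsUnique
    intro s
    have hcondV : ∀ x : s.pt.V, ∃ u, f.fV u = s.ι.fV x := by
      intro x
      have hc := congrFun (congrArg SGraphHom.fV s.condition) x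
      have h2 : True = (∃ u, f.fV u = s.ι.fV x) :=
        congrArg Prod.snd hc
      exact of_eq_true h2.symm
    choose lV hlV using hcondV
    have hcondE : ∀ a : s.pt.E, ∃ e, f.fE e = s.ι.fE a ∧
        G.ι e = (lV (s.pt.ι a).1, lV (s.pt.ι a).2) := by
      intro a
      apply hrefl
      refine (s.ι.comm a).trans ?_
      show (s.ι.fV (s.pt.ι a).1, s.ι.fV (s.pt.ι a).2) = _
      rw [hlV, hlV]
    choose lE hlE1 hlE2 using hcondE
    have hfac : (⟨lV, lE, hlE2⟩ : SGraphHom s.pt G) ≫ f = s.ι := by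
      apply SGraphHom.ext
      · funext x; exact hlV x
      · funext a; exact hlE1 a
    refine ⟨⟨lV, lE, hlE2⟩, ?_, ?_⟩
    · show (⟨lV, lE, hlE2⟩ : SGraphHom s.pt G) ≫ f = s.ι
      exact hfac
    · intro y hy
      have hy' : y ≫ f = s.ι := hy
      rw [← cancel_mono f]
      exact hy'.trans hfac.symm
end

section
/- Every morphism in the category SGraph of directed simple graphs factors as an epimorphism followed by a regular (edge-reflecting) monomorphism, and this factorization is unique up to isomorphism. Concretely, given f = (f_V, f_E) : S → S', factor f_V = m_V ∘ e_V in Set as epi-mono, and pull back ι' along Δ(m_V) = m_V × m_V to obtain the intermediate simple graph; the resulting factorization is epi followed by regular mono. -/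
open CategoryTheory Limits

section Aux

lemma SGraph.hom_ext' {A B : SGraph} {u v : A ⟶ B} (h1 : u.fV = v.fV) (h2 : u.fE = v.fE) :
    u = v := SGraphHom.ext h1 h2

/-- fV injective for monos. -/
lemma SGraph.fV_inj_of_mono {A B : SGraph} (m : A ⟶ B) [Mono m] :
    Function.Injective m.fV := by
  intro a b hab
  let P : SGraph := ⟨PUnit, PEmpty, fun e => e.elim, fun e => e.elim⟩
  let x : P ⟶ A := ⟨fun _ => a, fun e => e.elim, fun e => e.elim⟩
  let y : P ⟶ A := ⟨fun _ => b, fun e => e.elim, fun e => e.elim⟩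
  have h : x ≫ m = y ≫ m :=
    SGraph.hom_ext' (funext fun _ => hab) (funext fun e => e.elim)
  have h2 := (cancel_mono m).mp h
  exact congrFun (congrArg SGraphHom.fV h2) PUnit.unit

/-- The one-edge test graph. -/
def SGraph.edgeGraph : SGraph := ⟨Bool, PUnit, fun _ => (false, true), fun _ _ _ => rfl⟩

/-- Map from the edge graph picking an edge. -/
def SGraph.edgeHom (A : SGraph) (k : A.E) : SGraph.edgeGraph ⟶ A :=
  ⟨fun v => cond v (A.ι k).2 (A.ι k).1, fun _ => k, fun _ => by
    show A.ι k = ((A.ι k).1, (A.ι k).2)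
    exact Prod.mk.eta.symm⟩

lemma SGraph.fE_inj_of_mono {A B : SGraph} (m : A ⟶ B) [Mono m] :
    Function.Injective m.fE := by
  intro a b hab
  have ca := m.comm a
  have cb := m.comm b
  rw [hab] at ca
  have hends : (m.fV (A.ι a).1, m.fV (A.ι a).2) = (m.fV (A.ι b).1, m.fV (A.ι b).2) := by
    rw [← ca, ← cb]
  have h : SGraph.edgeHom A a ≫ m = SGraph.edgeHom A b ≫ m := by
    refine SGraph.hom_ext' (funext fun v => ?_) (funext fun _ => hab)
    cases v
    · show m.fV (A.ι a).1 = m.fV (A.ι b).1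
      exact congrArg Prod.fst hends
    · show m.fV (A.ι a).2 = m.fV (A.ι b).2
      exact congrArg Prod.snd hends
  have h2 := (cancel_mono m).mp h
  exact congrFun (congrArg SGraphHom.fE h2) PUnit.unit

/-- Regular monos reflect edges. -/
lemma SGraph.edge_reflect {A B : SGraph} (m : A ⟶ B) (rm : RegularMono m)
    (a b : A.V) (h' : B.E) (hι : B.ι h' = (m.fV a, m.fV b)) :
    ∃ k : A.E, m.fE k = h' ∧ A.ι k = (a, b) := by
  haveI : RegularMono m := rm
  haveI : Mono m := RegularMono.mono rm
  let t : SGraph.edgeGraph ⟶ B :=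
    ⟨fun v => cond v (m.fV b) (m.fV a), fun _ => h', fun _ => by
      show B.ι h' = (m.fV a, m.fV b); exact hι⟩
  have hw : t ≫ rm.left = t ≫ rm.right := by
    have hV : ∀ x : A.V, rm.left.fV (m.fV x) = rm.right.fV (m.fV x) := fun x =>
      congrFun (congrArg SGraphHom.fV rm.w) x
    refine SGraph.hom_ext' (funext fun v => ?_) (funext fun _ => ?_)
    · cases v
      · show rm.left.fV (m.fV a) = rm.right.fV (m.fV a)
        exact hV a
      · show rm.left.fV (m.fV b) = rm.right.fV (m.fV b)
        exact hV b
    · show rm.left.fE h' = rm.right.fE h'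
      apply rm.Z.inj
      rw [rm.left.comm, rm.right.comm, hι]
      exact Prod.ext (hV a) (hV b)
  obtain ⟨l, hl⟩ := Fork.IsLimit.lift' rm.isLimit t hw
  have hl' : l ≫ m = t := hl
  have hfe : m.fE (l.fE PUnit.unit) = h' := congrFun (congrArg SGraphHom.fE hl') PUnit.unit
  refine ⟨l.fE PUnit.unit, hfe, ?_⟩
  have hc := m.comm (l.fE PUnit.unit)
  rw [hfe, hι] at hc
  exact Prod.ext (SGraph.fV_inj_of_mono m (congrArg Prod.fst hc).symm)
    (SGraph.fV_inj_of_mono m (congrArg Prod.snd hc).symm)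

/-- A morphism with surjective vertex map is epi. -/
lemma SGraph.epi_of_surj {A B : SGraph} (e : A ⟶ B) (hs : Function.Surjective e.fV) :
    Epi e := by
  constructor
  intro X u v huv
  have hV : u.fV = v.fV := by
    funext x
    obtain ⟨g, rfl⟩ := hs x
    exact congrFun (congrArg SGraphHom.fV huv) g
  refine SGraph.hom_ext' hV (funext fun k => ?_)
  apply X.inj
  rw [u.comm, v.comm, hV]

/-- Epis have surjective vertex map. -/
lemma SGraph.surj_of_epi {A B : SGraph} (e : A ⟶ B) [Epi e] :
    Function.Surjective e.fV := by
  let Z : SGraph := ⟨Prop, Prop × Prop, id, fun _ _ h => h⟩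
  let u : B ⟶ Z := ⟨fun _ => True, fun _ => (True, True), fun _ => rfl⟩
  let v : B ⟶ Z := ⟨fun x => x ∈ Set.range e.fV,
    fun k => ((B.ι k).1 ∈ Set.range e.fV, (B.ι k).2 ∈ Set.range e.fV), fun _ => rfl⟩
  have h : e ≫ u = e ≫ v := by
    refine SGraph.hom_ext' (funext fun g => ?_) (funext fun g => ?_)
    · show True = (e.fV g ∈ Set.range e.fV)
      exact (eq_true ⟨g, rfl⟩).symm
    · show (True, True) = ((B.ι (e.fE g)).1 ∈ Set.range e.fV, (B.ι (e.fE g)).2 ∈ Set.range e.fV)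
      rw [e.comm]
      exact Prod.ext (eq_true ⟨(A.ι g).1, rfl⟩).symm (eq_true ⟨(A.ι g).2, rfl⟩).symm
  have huv : u = v := (cancel_epi e).mp h
  intro x
  have h2 : True = (x ∈ Set.range e.fV) := congrFun (congrArg SGraphHom.fV huv) x
  exact of_eq_true h2.symm

end Aux
section Img

/-- The image graph of a morphism. -/
def SGraph.imgGraph {G H : SGraph} (f : G ⟶ H) : SGraph where
  V := {v : H.V // v ∈ Set.range f.fV}
  E := {h' : H.E // (H.ι h').1 ∈ Set.range f.fV ∧ (H.ι h').2 ∈ Set.range f.fV}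
  ι k := (⟨(H.ι k.1).1, k.2.1⟩, ⟨(H.ι k.1).2, k.2.2⟩)
  inj := by
    intro a b hab
    apply Subtype.ext
    apply H.inj
    exact Prod.ext (congrArg (fun p => (p.1.1 : H.V)) hab)
      (congrArg (fun p => (p.2.1 : H.V)) hab)

/-- The epi part. -/
def SGraph.imgE {G H : SGraph} (f : G ⟶ H) : G ⟶ SGraph.imgGraph f where
  fV g := ⟨f.fV g, ⟨g, rfl⟩⟩
  fE g := Subtype.mk (f.fE g) (by rw [f.comm]; exact ⟨⟨(G.ι g).1, rfl⟩, ⟨(G.ι g).2, rfl⟩⟩)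
  comm g :=
    Prod.ext (Subtype.ext (congrArg Prod.fst (f.comm g)))
      (Subtype.ext (congrArg Prod.snd (f.comm g)))

/-- The mono part. -/
def SGraph.imgM {G H : SGraph} (f : G ⟶ H) : SGraph.imgGraph f ⟶ H where
  fV := Subtype.val
  fE := Subtype.val
  comm _ := Prod.mk.eta.symm

lemma SGraph.img_fac {G H : SGraph} (f : G ⟶ H) :
    SGraph.imgE f ≫ SGraph.imgM f = f :=
  SGraph.hom_ext' rfl rfl

/-- The mono part is a regular mono. -/
noncomputable def SGraph.imgM_regular {G H : SGraph} (f : G ⟶ H) :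
    RegularMono (SGraph.imgM f) where
  Z := ⟨H.V × Prop, H.E × Prop × Prop,
    fun ep => (((H.ι ep.1).1, ep.2.1), ((H.ι ep.1).2, ep.2.2)),
    by
      intro a b hab
      refine Prod.ext ?_ (Prod.ext ?_ ?_)
      · exact H.inj (Prod.ext (congrArg (fun p => p.1.1) hab) (congrArg (fun p => p.2.1) hab))
      · exact congrArg (fun p => p.1.2) hab
      · exact congrArg (fun p => p.2.2) hab⟩
  left := ⟨fun v => (v, True), fun k => (k, True, True), fun _ => rfl⟩
  right := ⟨fun v => (v, v ∈ Set.range f.fV),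
    fun k => (k, (H.ι k).1 ∈ Set.range f.fV, (H.ι k).2 ∈ Set.range f.fV), fun _ => rfl⟩
  w := by
    refine SGraph.hom_ext' (funext fun k => ?_) (funext fun k => ?_)
    · exact Prod.ext rfl (eq_true k.2).symm
    · exact Prod.ext rfl (Prod.ext (eq_true k.2.1).symm (eq_true k.2.2).symm)
  isLimit := by
    refine Fork.IsLimit.mk _ (fun s => ?_) (fun s => ?_) (fun s l hl => ?_)
    · refine ⟨fun x => ⟨s.ι.fV x, ?_⟩, fun k => Subtype.mk (s.ι.fE k) ⟨?_, ?_⟩, fun k => ?_⟩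
      · have h2 : True = (s.ι.fV x ∈ Set.range f.fV) :=
          congrArg Prod.snd (congrFun (congrArg SGraphHom.fV s.condition) x)
        exact of_eq_true h2.symm
      · have h2 : True = ((H.ι (s.ι.fE k)).1 ∈ Set.range f.fV) :=
          congrArg (fun p => p.2.1) (congrFun (congrArg SGraphHom.fE s.condition) k)
        exact of_eq_true h2.symm
      · have h2 : True = ((H.ι (s.ι.fE k)).2 ∈ Set.range f.fV) :=
          congrArg (fun p => p.2.2) (congrFun (congrArg SGraphHom.fE s.condition) k)
        exact of_eq_true h2.symm
      · exact Prod.ext (Subtype.ext (congrArg Prod.fst (s.ι.comm k)))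
          (Subtype.ext (congrArg Prod.snd (s.ι.comm k)))
    · exact SGraph.hom_ext' rfl rfl
    · have hl' : l ≫ SGraph.imgM f = s.ι := hl
      refine SGraph.hom_ext' (funext fun x => Subtype.ext ?_) (funext fun k => Subtype.ext ?_)
      · exact congrFun (congrArg SGraphHom.fV hl') x
      · exact congrFun (congrArg SGraphHom.fE hl') k

end Img
/-- Every morphism in `SGraph` factors as an epimorphism followed by a regular
monomorphism, uniquely up to isomorphism. -/
theorem stmt_15 {G H : SGraph} (f : G ⟶ H) :
    ∃ (K : SGraph) (e : G ⟶ K) (m : K ⟶ H),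
      Epi e ∧ Nonempty (RegularMono m) ∧ e ≫ m = f ∧
      ∀ (K' : SGraph) (e' : G ⟶ K') (m' : K' ⟶ H),
        Epi e' → Nonempty (RegularMono m') → e' ≫ m' = f →
        ∃ i : K ≅ K', e ≫ i.hom = e' ∧ i.hom ≫ m' = m := by
  classical
  refine ⟨SGraph.imgGraph f, SGraph.imgE f, SGraph.imgM f,
    SGraph.epi_of_surj _ (fun x => ?_), ⟨SGraph.imgM_regular f⟩, SGraph.img_fac f, ?_⟩
  · obtain ⟨g, hg⟩ := x.2
    exact ⟨g, Subtype.ext hg⟩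
  · intro K' e' m' he' hrm' hfac
    obtain ⟨rm'⟩ := hrm'
    haveI : Epi e' := he'
    haveI : RegularMono m' := rm'
    haveI : Mono m' := RegularMono.mono rm'
    have hsurj : Function.Surjective e'.fV := SGraph.surj_of_epi e'
    have hmV : Function.Injective m'.fV := SGraph.fV_inj_of_mono m'
    have hmE : Function.Injective m'.fE := SGraph.fE_inj_of_mono m'
    have hV : ∀ g, m'.fV (e'.fV g) = f.fV g := fun g =>
      congrFun (congrArg SGraphHom.fV hfac) g
    have hE : ∀ g, m'.fE (e'.fE g) = f.fE g := fun g =>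
      congrFun (congrArg SGraphHom.fE hfac) g
    have hr : ∀ x : K'.V, m'.fV x ∈ Set.range f.fV := fun x => by
      obtain ⟨g, hg⟩ := hsurj x
      exact ⟨g, by rw [← hV g, hg]⟩
    -- the comparison morphism `K' ⟶ imgGraph f`
    let j : K' ⟶ SGraph.imgGraph f :=
      ⟨fun x => ⟨m'.fV x, hr x⟩,
       fun k => Subtype.mk (m'.fE k) (by rw [m'.comm]; exact ⟨hr _, hr _⟩),
       fun k => Prod.ext (Subtype.ext (congrArg Prod.fst (m'.comm k)))
         (Subtype.ext (congrArg Prod.snd (m'.comm k)))⟩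
    have hjV : Function.Bijective j.fV := by
      constructor
      · intro x y h
        exact hmV (congrArg Subtype.val h)
      · rintro ⟨w, g, hg⟩
        exact ⟨e'.fV g, Subtype.ext (show m'.fV (e'.fV g) = w by rw [hV g]; exact hg)⟩
    have hjE : Function.Bijective j.fE := by
      constructor
      · intro x y h
        exact hmE (congrArg Subtype.val h)
      · rintro ⟨h', h1, h2⟩
        obtain ⟨a, ha⟩ := h1
        obtain ⟨b, hb⟩ := h2
        have hι : H.ι h' = (m'.fV (e'.fV a), m'.fV (e'.fV b)) := by
          rw [hV a, hV b, ha, hb]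
        obtain ⟨k, hk, _⟩ := SGraph.edge_reflect m' rm' (e'.fV a) (e'.fV b) h' hι
        exact ⟨k, Subtype.ext hk⟩
    let eV : K'.V ≃ (SGraph.imgGraph f).V := Equiv.ofBijective j.fV hjV
    let eE : K'.E ≃ (SGraph.imgGraph f).E := Equiv.ofBijective j.fE hjE
    let jinv : SGraph.imgGraph f ⟶ K' :=
      ⟨eV.symm, eE.symm, fun k => by
        have hk : j.fE (eE.symm k) = k := eE.apply_symm_apply k
        have hc := j.comm (eE.symm k)
        rw [hk] at hc
        refine Prod.ext ?_ ?_
        · apply eV.injective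
          show j.fV _ = eV (eV.symm _)
          rw [eV.apply_symm_apply]
          exact (congrArg Prod.fst hc).symm
        · apply eV.injective
          show j.fV _ = eV (eV.symm _)
          rw [eV.apply_symm_apply]
          exact (congrArg Prod.snd hc).symm⟩
    refine ⟨⟨jinv, j, ?_, ?_⟩, ?_, ?_⟩
    · exact SGraph.hom_ext' (funext fun x => eV.apply_symm_apply x)
        (funext fun k => eE.apply_symm_apply k)
    · exact SGraph.hom_ext' (funext fun x => eV.symm_apply_apply x)
        (funext fun k => eE.symm_apply_apply k)
    · refine SGraph.hom_ext' (funext fun g => ?_) (funext fun g => ?_)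
      · apply eV.injective
        show eV (eV.symm _) = j.fV _
        rw [eV.apply_symm_apply]
        exact Subtype.ext (hV g).symm
      · apply eE.injective
        show eE (eE.symm _) = j.fE _
        rw [eE.apply_symm_apply]
        exact Subtype.ext (hE g).symm
    · refine SGraph.hom_ext' (funext fun x => ?_) (funext fun k => ?_)
      · exact congrArg Subtype.val (eV.apply_symm_apply x)
      · exact congrArg Subtype.val (eE.apply_symm_apply k)
end

section
/- Multi-sum existence via epi-regular mono factorization: let C be a category with binary coproducts and (epi, regular mono)-factorizations in which regular monomorphisms are closed under the decomposition property (g∘f regular mono, g regular mono ⟹ f regular mono). Then for any cospan of regular monomorphisms a : A → Z ← B : b, factoring the induced morphism [a,b] : A + B → Z as an epimorphism e : A + B → Y followed by a regular monomorphism m : Y → Z yields a cospan (e ∘ in_A : A → Y, e ∘ in_B : B → Y) of regular monomorphisms together with the regular mono m : Y → Z satisfying a = m ∘ (e ∘ in_A) and b = m ∘ (e ∘ in_B). -/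
open CategoryTheory Limits

/-- Multi-sum existence via (epi, regular mono)-factorization: for a cospan of
regular monos `a : A → Z ← B : b`, factoring `[a,b] : A + B → Z` as an epi `e`
followed by a regular mono `m` yields a cospan of regular monos
`(in_A ≫ e, in_B ≫ e)` into the factorization object, through which `(a, b)`
factors via the regular mono `m`. -/
theorem stmt_17 {C : Type*} [Category C] [HasBinaryCoproducts C]
    (hfact : ∀ {X Y : C} (f : X ⟶ Y), ∃ (Z : C) (e : X ⟶ Z) (m : Z ⟶ Y),
      Epi e ∧ Nonempty (RegularMono m) ∧ e ≫ m = f)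
    (hdec : ∀ {X Y Z : C} (f : X ⟶ Y) (m : Y ⟶ Z),
      Nonempty (RegularMono (f ≫ m)) → Nonempty (RegularMono m) →
      Nonempty (RegularMono f))
    {A B Z : C} (a : A ⟶ Z) (b : B ⟶ Z)
    (ha : Nonempty (RegularMono a)) (hb : Nonempty (RegularMono b))
    {Y : C} (e : A ⨿ B ⟶ Y) (m : Y ⟶ Z)
    (he : Epi e) (hm : Nonempty (RegularMono m))
    (hfac : e ≫ m = coprod.desc a b) :
    Nonempty (RegularMono (coprod.inl ≫ e)) ∧
    Nonempty (RegularMono (coprod.inr ≫ e)) ∧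
    (coprod.inl ≫ e) ≫ m = a ∧ (coprod.inr ≫ e) ≫ m = b := by
  have h1 : (coprod.inl ≫ e) ≫ m = a := by
    rw [Category.assoc, hfac, coprod.inl_desc]
  have h2 : (coprod.inr ≫ e) ≫ m = b := by
    rw [Category.assoc, hfac, coprod.inr_desc]
  exact ⟨hdec _ m (h1 ▸ ha) hm, hdec _ m (h2 ▸ hb) hm, h1, h2⟩
end

section
/- Universal property of the M-multi-pushout-complement: let C be an M-adhesive category (M a stable system of monics, pushouts along M-morphisms exist, are pullbacks, and are pullback-stable), with morphisms f : A → B and b : B → D, b ∈ M. Suppose given a pushout square along an M-morphism n : A → E of (f composed appropriately), i.e., a pushout (1)+(2) of (f, n) with n ∈ M yielding cospan into an object C, and suppose the M-morphism m : B → C from the pushout factors as m = m' ∘ b with m', b ∈ M. Then there exists a pair (a : A → P, d : P → D) with a ∈ M such that (d, b) is a pushout of (a, f), together with an M-morphism p : P → E making the diagram commute and such that the square (P, E, D, C) is a pushout; moreover (a, d) is unique up to isomorphism among such pairs. -/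
open CategoryTheory Limits

/-- A commuting triangle with a mono gives a pullback square with identity. -/
lemma isPullback_id_of_mono'_s19 {C : Type*} [Category C] {A D X : C}
    (u : A ⟶ D) (g : D ⟶ X) [Mono g] : IsPullback u (𝟙 A) g (u ≫ g) := by
  refine IsPullback.of_isLimit (PullbackCone.IsLimit.mk (by simp)
    (fun s => s.snd) (fun s => ?_) (fun s => by simp) (fun s w h₁ h₂ => by simpa using h₂))
  have := s.condition
  rw [← Category.assoc] at this
  exact (cancel_mono g).mp this.symm

/-- Universal property of the `M`-multi-pushout-complement in an `M`-adhesive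
category: given `f : A ⟶ B`, `b : B ⟶ D` with `b ∈ M`, a pushout `(m, q)` of
`(f, n)` along an `M`-morphism `n : A ⟶ E`, and a factorization `m = m' ∘ b`
with `m' ∈ M`, there is an element `(a : A ⟶ P, d : P ⟶ D)` of the multi-POC
of `(f, b)` (i.e. `a ∈ M` and `(d, b)` is a pushout of `(a, f)`) together with
an `M`-morphism `p : P ⟶ E` making the diagram commute such that the square
`(P, E, D, C)` is a pushout; moreover `(a, d)` is unique up to isomorphism. -/
theorem stmt_19 {C : Type*} [Category C] [HasPullbacks C]
    (M : MorphismProperty C)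
    (hM_mono : ∀ {X Y : C} (f : X ⟶ Y), M f → Mono f)
    (hM_iso : ∀ {X Y : C} (f : X ⟶ Y), IsIso f → M f)
    (hM_comp : ∀ {X Y Z : C} (f : X ⟶ Y) (g : Y ⟶ Z), M f → M g → M (f ≫ g))
    (hM_pb : ∀ {P X Y Z : C} (fst : P ⟶ X) (snd : P ⟶ Y) (h : X ⟶ Z) (k : Y ⟶ Z),
      IsPullback fst snd h k → M k → M fst)
    (hM_po : ∀ {A B X D : C} (f : A ⟶ B) (g : A ⟶ X) (h : B ⟶ D) (k : X ⟶ D),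
      IsPushout f g h k → M g → M h)
    (hM_po_pb : ∀ {A B X D : C} (f : A ⟶ B) (g : A ⟶ X) (h : B ⟶ D) (k : X ⟶ D),
      IsPushout f g h k → M g → IsPullback f g h k)
    (hM_po_stable : ∀ {A B X D : C} (f : A ⟶ B) (g : A ⟶ X) (h : B ⟶ D) (k : X ⟶ D),
      IsPushout f g h k → M g → IsStablePushout f g h k)
    {A B D E X : C} (f : A ⟶ B) (b : B ⟶ D) (hb : M b)
    (n : A ⟶ E) (hn : M n) (m : B ⟶ X) (q : E ⟶ X)
    (hpo : IsPushout f n m q)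
    (m' : D ⟶ X) (hm' : M m') (hfac : m = b ≫ m') :
    ∃ (P : C) (a : A ⟶ P) (d : P ⟶ D) (p : P ⟶ E),
      M a ∧ M p ∧ IsPushout a f d b ∧ IsPushout p d q m' ∧ a ≫ p = n ∧
      ∀ (P' : C) (a' : A ⟶ P') (d' : P' ⟶ D) (p' : P' ⟶ E),
        M a' → M p' → IsPushout a' f d' b → IsPushout p' d' q m' → a' ≫ p' = n →
        ∃ δ : P ≅ P', a ≫ δ.hom = a' ∧ δ.hom ≫ d' = d := by
  have mono_m' : Mono m' := hM_mono m' hm'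
  -- construct P as the pullback of q and m'
  set P := pullback q m' with hPdef
  set p : P ⟶ E := pullback.fst q m' with hpdef
  set d : P ⟶ D := pullback.snd q m' with hddef
  have hP : IsPullback p d q m' := IsPullback.of_hasPullback q m'
  have wa : n ≫ q = (f ≫ b) ≫ m' := by
    rw [Category.assoc, ← hfac, ← hpo.w]
  set a : A ⟶ P := pullback.lift n (f ≫ b) wa with hadef
  have hap : a ≫ p = n := pullback.lift_fst _ _ _
  have had : a ≫ d = f ≫ b := pullback.lift_snd _ _ _
  -- square (a, 𝟙, p, n) is a pullback
  have pb_big : IsPullback (f ≫ b) (𝟙 A) m' (n ≫ q) := by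
    have := isPullback_id_of_mono'_s19 (f ≫ b) m'
    rwa [← wa] at this
  have pb2 : IsPullback a (𝟙 A) p n := by
    refine IsPullback.of_right ?_ (by simpa using hap) hP.flip
    rwa [had]
  -- square (b, 𝟙, m', m) is a pullback
  have pb3 : IsPullback b (𝟙 B) m' m := by
    have := isPullback_id_of_mono'_s19 b m'
    rwa [← hfac] at this
  have pb1 : IsPullback f (𝟙 A) (𝟙 B) f := IsPullback.of_id_snd
  -- pushout-pullback decomposition via stability
  have hpo1 : IsPushout f a b d :=
    (hM_po_stable f n m q hpo hn).2 f a b d (𝟙 A) (𝟙 B) p m' pb1 pb2 pb3 hP.flip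
  -- the bottom square is a pushout by cancellation
  have hpo2 : IsPushout d p m' q := by
    refine IsPushout.of_top ?_ hP.w.symm hpo1
    rwa [hap, ← hfac]
  have hMa : M a := hM_pb a (𝟙 A) p n pb2 hn
  have hMp : M p := hM_pb p d q m' hP hm'
  refine ⟨P, a, d, p, hMa, hMp, hpo1.flip, hpo2.flip, hap, ?_⟩
  intro P' a' d' p' _ hMp' hpo1' hpo2' hap'
  have hpb' : IsPullback p' d' q m' := (hM_po_pb d' p' m' q hpo2'.flip hMp').flip
  set ι : P' ≅ pullback q m' := hpb'.isoPullback with hιdef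
  have hfst : ι.hom ≫ p = p' := hpb'.isoPullback_hom_fst
  have hsnd : ι.hom ≫ d = d' := hpb'.isoPullback_hom_snd
  have key : a' ≫ ι.hom = a := by
    apply pullback.hom_ext
    · rw [Category.assoc]
      show a' ≫ ι.hom ≫ p = a ≫ p
      rw [hfst, hap, hap']
    · rw [Category.assoc]
      show a' ≫ ι.hom ≫ d = a ≫ d
      rw [hsnd, had, hpo1'.w.symm]
  refine ⟨ι.symm, ?_, ?_⟩
  · rw [Iso.symm_hom, ← key, Category.assoc, Iso.hom_inv_id, Category.comp_id]
  · rw [Iso.symm_hom, ← hsnd, ← Category.assoc, Iso.inv_hom_id, Category.id_comp]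
end
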